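/- arXiv:1510.00731 — 5 statements merged into one kernel-verified Lean document; each statement's English description precedes it below -/
import Mathlib

section
/- For all integers p ≥ 0 and n ≥ 1, p! + ∑_{t=0}^{p} s(p+1, t+1) · S_t(n) = p! · C(n+p+1, p+1), where s(a,b) is the unsigned Stirling number of the first kind and S_t(n) = ∑_{k=1}^{n} k^t. -/
def stirling : ℕ → ℕ → ℕ
  | 0, 0 => 1
  | 0, _ + 1 => 0
  | _ + 1, 0 => 0
  | n + 1, k + 1 => n * stirling n (k + 1) + stirling n k

lemma stirling_zero (n : ℕ) : stirling (n + 1) 0 = 0 := rfl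

lemma key (p k : ℕ) :
    ∑ t ∈ Finset.range (p + 1), stirling (p + 1) (t + 1) * k ^ t
      = (k + 1).ascFactorial p := by
  induction p with
  | zero => simp [stirling]
  | succ p ih =>
    have h1 : ∀ t, stirling (p + 2) (t + 1) = (p + 1) * stirling (p + 1) (t + 1)
        + stirling (p + 1) t := fun t => rfl
    have h2 : ∑ t ∈ Finset.range (p + 2), stirling (p + 1) t * k ^ t
        = k * ∑ t ∈ Finset.range (p + 1), stirling (p + 1) (t + 1) * k ^ t := by
      rw [Finset.sum_range_succ', Finset.mul_sum]
      simp [stirling_zero, pow_succ, mul_comm, mul_assoc, mul_left_comm]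
    calc ∑ t ∈ Finset.range (p + 2), stirling (p + 2) (t + 1) * k ^ t
        = (p + 1) * ∑ t ∈ Finset.range (p + 2), stirling (p + 1) (t + 1) * k ^ t
          + ∑ t ∈ Finset.range (p + 2), stirling (p + 1) t * k ^ t := by
          simp only [h1, add_mul, Finset.sum_add_distrib, Finset.mul_sum, mul_assoc]
      _ = (p + 1) * ((k + 1).ascFactorial p) + k * ((k + 1).ascFactorial p) := by
          rw [h2, ih]
          congr 1
          rw [Finset.sum_range_succ]
          have : stirling (p + 1) (p + 2) = 0 := by
            have h3 : ∀ m j, m < j → stirling m j = 0 := by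
              intro m
              induction m with
              | zero => intro j hj; cases j with
                        | zero => omega
                        | succ j => rfl
              | succ m ihm =>
                intro j hj
                cases j with
                | zero => omega
                | succ j =>
                  show m * stirling m (j + 1) + stirling m j = 0
                  rw [ihm _ (by omega), ihm _ (by omega)]; ring
            exact h3 _ _ (by omega)
          rw [this, ih]; ring
      _ = (k + 1).ascFactorial (p + 1) := by
          rw [Nat.ascFactorial_succ]; ring

theorem stmt_1 (p n : ℕ) (hn : 1 ≤ n) :
    Nat.factorial p + ∑ t ∈ Finset.range (p + 1),
        stirling (p + 1) (t + 1) * ∑ k ∈ Finset.Icc 1 n, k ^ t =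
      Nat.factorial p * (n + p + 1).choose (p + 1) := by
  have hswap : ∑ t ∈ Finset.range (p + 1),
      stirling (p + 1) (t + 1) * ∑ k ∈ Finset.Icc 1 n, k ^ t
      = ∑ k ∈ Finset.Icc 1 n, (k + 1).ascFactorial p := by
    simp_rw [Finset.mul_sum]
    rw [Finset.sum_comm]
    exact Finset.sum_congr rfl fun k _ => key p k
  rw [hswap]
  have h2 : ∀ k, (k + 1).ascFactorial p = p.factorial * (k + p).choose p := fun k =>
    Nat.ascFactorial_eq_factorial_mul_choose k p
  simp_rw [h2]
  rw [← Finset.mul_sum]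
  have h3 : ∑ k ∈ Finset.Icc 1 n, (k + p).choose p
      = ∑ m ∈ Finset.Icc (p + 1) (n + p), m.choose p := by
    have : Finset.Icc (p + 1) (n + p) = Finset.map (addRightEmbedding p) (Finset.Icc 1 n) := by
      rw [Finset.map_add_right_Icc]; congr 1; omega
    rw [this, Finset.sum_map]; rfl
  have h4 : Finset.Icc p (n + p) = insert p (Finset.Icc (p + 1) (n + p)) := by
    ext m; simp; omega
  have h5 : ∑ m ∈ Finset.Icc p (n + p), m.choose p
      = p.choose p + ∑ m ∈ Finset.Icc (p + 1) (n + p), m.choose p := by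
    rw [h4, Finset.sum_insert (by simp)]
  have h6 := Nat.sum_Icc_choose (n + p) p
  rw [h3]
  calc p.factorial + p.factorial * ∑ m ∈ Finset.Icc (p + 1) (n + p), m.choose p
      = p.factorial * (p.choose p + ∑ m ∈ Finset.Icc (p + 1) (n + p), m.choose p) := by
        rw [Nat.choose_self]; ring
    _ = p.factorial * (n + p + 1).choose (p + 1) := by rw [← h5, h6]
end

section
/- For all integers p ≥ 0 and n ≥ 1, ∑_{k=1}^{n} C(k+p, p) · H_k = C(n+p+1, p+1) · H_n − (1/(p+1)!) · ∑_{t=0}^{p} s(p+1, t+1) · S_t(n), where H_k is the k-th harmonic number. -/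
open Finset

lemma stirling_eq_zero : ∀ p k : ℕ, p < k → stirling p k = 0
  | 0, _ + 1, _ => rfl
  | p + 1, k + 1, h => by
    have h1 : p < k + 1 := by omega
    have h2 : p < k := by omega
    simp [stirling, stirling_eq_zero p (k+1) h1, stirling_eq_zero p k h2]

lemma stirling_succ_zero (p : ℕ) : stirling (p+1) 0 = 0 := rfl

lemma stirling_poly (p : ℕ) (x : ℚ) :
    ∑ k ∈ Finset.range (p+1), (stirling p k : ℚ) * x^k = ∏ i ∈ Finset.range p, (x + i) := by
  induction p with
  | zero => simp [stirling]
  | succ p ih =>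
    rw [Finset.sum_range_succ', Finset.prod_range_succ]
    have hrec : ∀ k, (stirling (p+1) (k+1) : ℚ) = p * stirling p (k+1) + stirling p k := by
      intro k; push_cast [stirling]; ring
    have h1 : ∑ k ∈ Finset.range (p+1), (stirling (p+1) (k+1) : ℚ) * x^(k+1)
        = (p : ℚ) * (∑ k ∈ Finset.range (p+1), (stirling p (k+1) : ℚ) * x^(k+1))
          + x * (∑ k ∈ Finset.range (p+1), (stirling p k : ℚ) * x^k) := by
      rw [Finset.mul_sum, Finset.mul_sum, ← Finset.sum_add_distrib]
      apply Finset.sum_congr rfl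
      intro k _
      rw [hrec]; ring
    have h2 : (p : ℚ) * (∑ k ∈ Finset.range (p+1), (stirling p (k+1) : ℚ) * x^(k+1))
        = (p : ℚ) * (∑ k ∈ Finset.range (p+1), (stirling p k : ℚ) * x^k) := by
      rcases Nat.eq_zero_or_pos p with hp | hp
      · simp [hp]
      · congr 1
        rw [Finset.sum_range_succ, Finset.sum_range_succ']
        have : stirling p 0 = 0 := by
          cases p with
          | zero => omega
          | succ q => rfl
        have h3 : stirling p (p+1) = 0 := stirling_eq_zero p (p+1) (by omega)
        simp [this, h3]
    rw [h1, h2, stirling_succ_zero, ih]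
    push_cast
    ring

lemma prod_choose (p j : ℕ) :
    ∏ i ∈ Finset.range p, ((j:ℚ) + 1 + i) = (p.factorial : ℚ) * (j+p).choose p := by
  induction p with
  | zero => simp
  | succ p ih =>
    rw [Finset.prod_range_succ, ih]
    have key : (j + p + 1) * (j+p).choose p = (j+p+1).choose (p+1) * (p+1) :=
      Nat.add_one_mul_choose_eq (j+p) p
    have : ((j:ℚ) + p + 1) * (j+p).choose p = ((j+p+1).choose (p+1) : ℚ) * (p+1) := by
      exact_mod_cast congrArg (fun x : ℕ => (x : ℚ)) key
    have hfac : ((p+1).factorial : ℚ) = (p+1) * p.factorial := by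
      push_cast [Nat.factorial_succ]; ring
    rw [show j + (p+1) = j + p + 1 from rfl, hfac]
    nlinarith [this]

lemma stirling_sum_eval (p j : ℕ) (hj : 1 ≤ j) :
    ∑ t ∈ Finset.range (p+1), (stirling (p+1) (t+1) : ℚ) * (j:ℚ)^t
      = (p.factorial : ℚ) * (j+p).choose p := by
  have h := stirling_poly (p+1) (j : ℚ)
  rw [Finset.sum_range_succ' _ (p+1), Finset.prod_range_succ'] at h
  simp only [stirling_succ_zero, Nat.cast_zero, zero_mul, pow_zero, add_zero] at h
  have hx : (j : ℚ) ≠ 0 := by positivity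
  have h2 : ∑ k ∈ Finset.range (p+1), (stirling (p+1) (k+1) : ℚ) * (j:ℚ)^(k+1)
      = (j:ℚ) * ∑ t ∈ Finset.range (p+1), (stirling (p+1) (t+1) : ℚ) * (j:ℚ)^t := by
    rw [Finset.mul_sum]; apply Finset.sum_congr rfl; intro k _; ring
  rw [h2] at h
  have h4 : (∏ k ∈ Finset.range p, ((j:ℚ) + ↑(k+1))) = (p.factorial:ℚ) * (j+p).choose p := by
    rw [← prod_choose]; apply Finset.prod_congr rfl; intro i _; push_cast; ring
  rw [h4] at h
  apply mul_left_cancel₀ hx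
  rw [h]; ring

lemma choose_cast_key (p n : ℕ) :
    ((p:ℚ)+1) * (n+p+1).choose (p+1) = ((n:ℚ)+1) * (n+p+1).choose p := by
  have h1 : (n+p+1) * (n+p).choose p = (n+p+1).choose (p+1) * (p+1) :=
    Nat.add_one_mul_choose_eq (n+p) p
  have h2 : (n+p+1) * (n+p).choose n = (n+p+1).choose (n+1) * (n+1) := by
    simpa [Nat.succ_eq_add_one] using Nat.add_one_mul_choose_eq (n+p) n
  have h3 : (n+p).choose n = (n+p).choose p := by
    have := Nat.choose_symm (n := n+p) (k := p) (by omega)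
    rwa [show n + p - p = n by omega] at this
  have h4 : (n+p+1).choose (n+1) = (n+p+1).choose p := by
    have := Nat.choose_symm (n := n+p+1) (k := n+1) (by omega)
    rw [show n + p + 1 - (n+1) = p by omega] at this
    omega
  rw [h3, h4] at h2
  have : (n+p+1).choose (p+1) * (p+1) = (n+p+1).choose p * (n+1) := by omega
  exact_mod_cast by
    have := congrArg (fun x : ℕ => (x:ℚ)) this
    push_cast at this
    linarith

lemma main_aux (p n : ℕ) (hn : 1 ≤ n) :
    ∑ k ∈ Finset.Icc 1 n, ((k + p).choose p : ℚ) * harmonic k =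
      ((n + p + 1).choose (p + 1) : ℚ) * harmonic n -
        (1 / ((p:ℚ)+1)) * ∑ j ∈ Finset.Icc 1 n, ((j + p).choose p : ℚ) := by
  induction n, hn using Nat.le_induction with
  | base =>
    have hone : harmonic 1 = 1 := by norm_num [harmonic]
    simp only [Finset.Icc_self, Finset.sum_singleton, hone]
    have h1 : (1 + p).choose p = p + 1 := by
      have := Nat.choose_symm (n := 1+p) (k := p) (by omega)
      rw [show 1 + p - p = 1 by omega, Nat.choose_one_right] at this
      omega
    have h2 : (1 + p + 1).choose (p+1) = p + 2 := by
      have := Nat.choose_symm (n := p+2) (k := p+1) (by omega)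
      rw [show p + 2 - (p+1) = 1 by omega, Nat.choose_one_right] at this
      rw [show 1 + p + 1 = p + 2 by omega]
      omega
    rw [h1, h2]
    push_cast
    have hp : ((p:ℚ)+1) ≠ 0 := by positivity
    field_simp
    ring
  | succ n hn ih =>
    rw [Finset.sum_Icc_succ_top (by omega), Finset.sum_Icc_succ_top (by omega), ih,
      harmonic_succ]
    have hkey := choose_cast_key p n
    have hA : ((n + 1 + p + 1).choose (p+1) : ℚ)
        = ((n+p+1).choose p : ℚ) + ((n+p+1).choose (p+1) : ℚ) := by
      rw [show n + 1 + p + 1 = (n+p+1) + 1 by omega]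
      rw [Nat.choose_succ_succ]
      push_cast; ring
    have hB : ((n + 1 + p).choose p : ℚ) = ((n+p+1).choose p : ℚ) := by
      norm_num [show n + 1 + p = n + p + 1 by omega]
    rw [hA, hB]
    have hp : ((p:ℚ)+1) ≠ 0 := by positivity
    have hn1 : ((n:ℚ)+1) ≠ 0 := by positivity
    have key2 : ((n+p+1).choose (p+1) : ℚ) * ((n:ℚ)+1)⁻¹
        = ((n+p+1).choose p : ℚ) * (1/((p:ℚ)+1)) := by
      field_simp
      linarith [hkey]
    push_cast
    linear_combination -key2

theorem stmt_5 (p n : ℕ) (hn : 1 ≤ n) :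
    ∑ k ∈ Finset.Icc 1 n, ((k + p).choose p : ℚ) * harmonic k =
      ((n + p + 1).choose (p + 1) : ℚ) * harmonic n -
        (1 / (Nat.factorial (p + 1) : ℚ)) *
          ∑ t ∈ Finset.range (p + 1),
            (stirling (p + 1) (t + 1) : ℚ) * ∑ j ∈ Finset.Icc 1 n, (j : ℚ) ^ t := by
  have hswap : ∑ t ∈ Finset.range (p + 1),
      (stirling (p + 1) (t + 1) : ℚ) * ∑ j ∈ Finset.Icc 1 n, (j : ℚ) ^ t
      = ∑ j ∈ Finset.Icc 1 n, ((p.factorial : ℚ) * (j+p).choose p) := by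
    simp_rw [Finset.mul_sum]
    rw [Finset.sum_comm]
    exact Finset.sum_congr rfl fun j hj => stirling_sum_eval p j (Finset.mem_Icc.mp hj).1
  rw [hswap, main_aux p n hn]
  rw [← Finset.mul_sum, ← mul_assoc]
  congr 2
  rw [Nat.factorial_succ]
  push_cast
  have h1 : (p.factorial : ℚ) ≠ 0 := by positivity
  have h2 : ((p:ℚ)+1) ≠ 0 := by positivity
  field_simp
end

section
/- For all integers p ≥ 0 and n ≥ 1, ∑_{k=1}^{n} C(k+p, p) · H_k = C(n+p+1, p+1) · H_n − (1/(p+1)) · (C(n+p+1, p+1) − 1), where H_k is the k-th harmonic number. -/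
lemma key_choose (p n : ℕ) :
    (p + 1) * (n + p + 1).choose (p + 1) = (n + 1) * (n + p + 1).choose p := by
  have h1 := Nat.add_one_mul_choose_eq (n + p) p
  have h2 := Nat.add_one_mul_choose_eq (n + p) n
  have h3 : (n + p).choose n = (n + p).choose p := Nat.choose_symm_add
  have h4 : (n + p + 1).choose (n + 1) = (n + p + 1).choose p := by
    have : (n + 1) + p = n + p + 1 := by ring
    rw [← this]; exact Nat.choose_symm_add
  rw [h3, h4] at h2
  calc (p + 1) * (n + p + 1).choose (p + 1)
      = (n + p + 1).choose (p + 1) * (p + 1) := by ring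
    _ = (n + p + 1) * (n + p).choose p := h1.symm
    _ = (n + p + 1).choose p * (n + 1) := h2
    _ = (n + 1) * (n + p + 1).choose p := by ring

theorem stmt_6 (p n : ℕ) (hn : 1 ≤ n) :
    ∑ k ∈ Finset.Icc 1 n, ((k + p).choose p : ℚ) * harmonic k =
      ((n + p + 1).choose (p + 1) : ℚ) * harmonic n -
        (1 / (p + 1 : ℚ)) * (((n + p + 1).choose (p + 1) : ℚ) - 1) := by
  induction n with
  | zero => omega
  | succ n ih =>
    rcases Nat.eq_zero_or_pos n with hn0 | hn0
    · subst hn0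
      simp [harmonic_succ, Nat.choose_symm_add (a := 1) (b := p) ]
      have hp : ((p : ℚ) + 1) ≠ 0 := by positivity
      have h1 : (1 + p + 1).choose (p + 1) = p + 2 := by
        have : (1 + p + 1) = (p + 1) + 1 := by ring
        rw [this, Nat.choose_succ_self_right]
      have h2 : (1 + p).choose p = p + 1 := by
        have : 1 + p = p + 1 := by ring
        rw [this, Nat.choose_succ_self_right]
      rw [h1, h2]
      push_cast
      field_simp
      ring
    · have IH := ih hn0
      rw [Finset.sum_Icc_succ_top (by omega)]
      rw [IH, harmonic_succ]
      have hA : ((n + 1) + p + 1).choose (p + 1)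
          = (n + p + 1).choose (p + 1) + (n + p + 1).choose p := by
        have : (n + 1) + p + 1 = (n + p + 1) + 1 := by ring
        rw [this, Nat.choose_succ_succ']
        omega
      have hB : ((n + 1) + p).choose p = (n + p + 1).choose p := by
        congr 1; ring
      rw [hA, hB]
      have hkey : ((p : ℚ) + 1) * ((n + p + 1).choose (p + 1) : ℚ)
          = ((n : ℚ) + 1) * ((n + p + 1).choose p : ℚ) := by
        exact_mod_cast congrArg (Nat.cast : ℕ → ℚ) (key_choose p n)
      have hp : ((p : ℚ) + 1) ≠ 0 := by positivity
      have hn1 : ((n : ℚ) + 1) ≠ 0 := by positivity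
      push_cast
      field_simp
      linear_combination (-1:ℚ)*hkey
end

section
/- For all integers p ≥ 0 and n ≥ 1, ∑_{j=1}^{n} (1/j) · C(j+p, p+1) = (1/(p+1)!) · ∑_{t=0}^{p} s(p+1, t+1) · S_t(n), where s is the unsigned Stirling number of the first kind and S_t(n) = ∑_{k=1}^{n} k^t. -/
lemma stirling_zero_right : ∀ m, stirling (m + 1) 0 = 0 := fun _ => rfl

lemma stirling_eq_zero_of_lt : ∀ n k, n < k → stirling n k = 0 := by
  intro n
  induction n with
  | zero => intro k hk; match k, hk with | k + 1, _ => rfl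
  | succ n ih =>
    intro k hk
    match k, hk with
    | k + 1, hk =>
      show n * stirling n (k + 1) + stirling n k = 0
      rw [ih (k + 1) (by omega), ih k (by omega)]
      simp

lemma rising_eq_sum (m : ℕ) (x : ℚ) :
    ∏ i ∈ Finset.range m, (x + i) =
      ∑ k ∈ Finset.range (m + 1), (stirling m k : ℚ) * x ^ k := by
  induction m with
  | zero => simp [stirling]
  | succ m ih =>
    rw [Finset.prod_range_succ, ih]
    have hstep : ∀ k, (stirling (m + 1) (k + 1) : ℚ)
        = m * stirling m (k + 1) + stirling m k := by
      intro k; rw [show stirling (m + 1) (k + 1) = m * stirling m (k + 1) + stirling m k from rfl]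
      push_cast; ring
    rw [Finset.sum_mul]
    have expand : ∀ k, (stirling m k : ℚ) * x ^ k * (x + m)
        = (stirling m k : ℚ) * x ^ (k + 1) + (m * stirling m k) * x ^ k := by
      intro k; ring
    rw [Finset.sum_congr rfl fun k _ => expand k, Finset.sum_add_distrib]
    -- first sum: shift index
    have h1 : ∑ k ∈ Finset.range (m + 1), (stirling m k : ℚ) * x ^ (k + 1)
        = ∑ k ∈ Finset.range (m + 2), (if k = 0 then 0 else (stirling m (k - 1) : ℚ)) * x ^ k := by
      conv_rhs => rw [Finset.sum_range_succ']
      simp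
    rw [h1]
    have h2 : ∑ k ∈ Finset.range (m + 1), ((m : ℚ) * stirling m k) * x ^ k
        = ∑ k ∈ Finset.range (m + 2), ((m : ℚ) * stirling m k) * x ^ k := by
      conv_rhs => rw [Finset.sum_range_succ]
      simp [stirling_eq_zero_of_lt m (m + 1) (by omega)]
    rw [h2, ← Finset.sum_add_distrib]
    refine Finset.sum_congr rfl fun k _ => ?_
    cases k with
    | zero =>
      simp only [if_pos rfl]
      cases m with
      | zero => simp [stirling]
      | succ m => simp [stirling_zero_right, show stirling (m + 2) 0 = 0 from rfl]
    | succ k =>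
      simp only [Nat.succ_ne_zero, if_false, Nat.succ_sub_one, hstep]
      ring

lemma rising_shift (m : ℕ) (x : ℚ) :
    x * ∑ t ∈ Finset.range (m + 1), (stirling (m + 1) (t + 1) : ℚ) * x ^ t =
      ∏ i ∈ Finset.range (m + 1), (x + i) := by
  conv_rhs => rw [rising_eq_sum, Finset.sum_range_succ']
  rw [stirling_zero_right, Finset.mul_sum]
  push_cast
  simp only [zero_mul, pow_zero, mul_one, add_zero]
  exact Finset.sum_congr rfl fun k _ => by ring

lemma cast_ascFactorial (j r : ℕ) :
    ((j.ascFactorial r : ℕ) : ℚ) = ∏ i ∈ Finset.range r, ((j : ℚ) + i) := by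
  induction r with
  | zero => simp
  | succ r ih =>
    rw [Nat.ascFactorial_succ, Finset.prod_range_succ, ← ih]
    push_cast
    ring

theorem stmt_8 (p n : ℕ) (hn : 1 ≤ n) :
    ∑ j ∈ Finset.Icc 1 n, (1 / (j : ℚ)) * ((j + p).choose (p + 1) : ℚ) =
      (1 / (Nat.factorial (p + 1) : ℚ)) *
        ∑ t ∈ Finset.range (p + 1),
          (stirling (p + 1) (t + 1) : ℚ) * ∑ k ∈ Finset.Icc 1 n, (k : ℚ) ^ t := by
  have key : ∀ j ∈ Finset.Icc 1 n, (1 / (j : ℚ)) * ((j + p).choose (p + 1) : ℚ)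
      = ∑ t ∈ Finset.range (p + 1),
          (1 / (Nat.factorial (p + 1) : ℚ)) * ((stirling (p + 1) (t + 1) : ℚ) * (j : ℚ) ^ t) := by
    intro j hj
    have hj1 : 1 ≤ j := (Finset.mem_Icc.mp hj).1
    have hj0 : (j : ℚ) ≠ 0 := by positivity
    have hf0 : ((Nat.factorial (p + 1) : ℕ) : ℚ) ≠ 0 := by
      exact_mod_cast Nat.factorial_ne_zero (p + 1)
    have hchoose : j.ascFactorial (p + 1) = Nat.factorial (p + 1) * (j + p).choose (p + 1) := by
      have e : j + (p + 1) - 1 = j + p := by omega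
      rw [Nat.ascFactorial_eq_factorial_mul_choose', e]
    have h := rising_shift p (j : ℚ)
    rw [← cast_ascFactorial, hchoose] at h
    push_cast at h
    rw [← Finset.mul_sum]
    field_simp
    linear_combination -h
  calc ∑ j ∈ Finset.Icc 1 n, (1 / (j : ℚ)) * ((j + p).choose (p + 1) : ℚ)
      = ∑ j ∈ Finset.Icc 1 n, ∑ t ∈ Finset.range (p + 1),
          (1 / (Nat.factorial (p + 1) : ℚ)) * ((stirling (p + 1) (t + 1) : ℚ) * (j : ℚ) ^ t) :=
        Finset.sum_congr rfl key
    _ = ∑ t ∈ Finset.range (p + 1), ∑ j ∈ Finset.Icc 1 n,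
          (1 / (Nat.factorial (p + 1) : ℚ)) * ((stirling (p + 1) (t + 1) : ℚ) * (j : ℚ) ^ t) :=
        Finset.sum_comm
    _ = _ := by
        rw [Finset.mul_sum]
        exact Finset.sum_congr rfl fun t _ => by
          rw [← Finset.mul_sum, ← Finset.mul_sum]
end

section
/- For all positive integers r and p ≥ 0, ∑_{t=0}^{p} r^t · s(p+1, t+1) = p! · (C(r+p+1, p+1) − 1) − ∑_{j=1}^{r-1} ∑_{t=0}^{p} j^t · s(p+1, t+1). -/
lemma stirling_sum_asc (p j : ℕ) :
    ∑ t ∈ Finset.range (p + 1), j ^ t * stirling (p + 1) (t + 1) =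
      (j + 1).ascFactorial p := by
  induction p with
  | zero => simp [stirling]
  | succ p ih =>
    have h1 : ∀ t, stirling (p + 2) (t + 1) =
        (p + 1) * stirling (p + 1) (t + 1) + stirling (p + 1) t := fun t => rfl
    have hz : stirling (p + 1) (p + 2) = 0 := by
      clear h1 ih
      have gen : ∀ n k, n < k → stirling n k = 0 := by
        intro n
        induction n with
        | zero => intro k hk; cases k with
          | zero => omega
          | succ k => rfl
        | succ n ihn =>
          intro k hk
          cases k with
          | zero => omega
          | succ k => show n * stirling n (k+1) + stirling n k = 0
                      rw [ihn (k+1) (by omega), ihn k (by omega)]; simp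
      exact gen _ _ (by omega)
    calc ∑ t ∈ Finset.range (p + 2), j ^ t * stirling (p + 2) (t + 1)
        = (p + 1) * ∑ t ∈ Finset.range (p + 2), j ^ t * stirling (p + 1) (t + 1)
          + ∑ t ∈ Finset.range (p + 2), j ^ t * stirling (p + 1) t := by
          simp only [h1]; rw [Finset.mul_sum, ← Finset.sum_add_distrib]
          congr 1; ext t; ring
      _ = (p + 1) * ∑ t ∈ Finset.range (p + 1), j ^ t * stirling (p + 1) (t + 1)
          + j * ∑ t ∈ Finset.range (p + 1), j ^ t * stirling (p + 1) (t + 1) := by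
          congr 1
          · rw [Finset.sum_range_succ, hz]; simp
          · rw [Finset.sum_range_succ', Finset.mul_sum]
            simp [stirling, pow_succ, mul_comm, mul_assoc, mul_left_comm]
      _ = (j + 1 + p) * ((j + 1).ascFactorial p) := by rw [ih]; ring
      _ = (j + 1).ascFactorial (p + 1) := (Nat.ascFactorial_succ).symm

lemma stirling_sum_choose (p j : ℕ) :
    ∑ t ∈ Finset.range (p + 1), (j : ℤ) ^ t * (stirling (p + 1) (t + 1) : ℤ) =
      (Nat.factorial p : ℤ) * ((j + p).choose p : ℤ) := by
  have := stirling_sum_asc p j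
  rw [Nat.ascFactorial_eq_factorial_mul_choose] at this
  have := congrArg (Nat.cast : ℕ → ℤ) this
  push_cast at this ⊢
  rw [← this]

lemma sum_choose_Icc (p r : ℕ) :
    ∑ j ∈ Finset.Icc 1 r, (Nat.factorial p : ℤ) * ((j + p).choose p : ℤ) =
      (Nat.factorial p : ℤ) * (((r + p + 1).choose (p + 1) : ℤ) - 1) := by
  induction r with
  | zero => simp
  | succ r ih =>
    rw [Finset.sum_Icc_succ_top (by omega : 1 ≤ r + 1), ih]
    have h2 : (r + 1 + p + 1).choose (p + 1) = (r + p + 1).choose p + (r + p + 1).choose (p + 1) := by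
      rw [show r + 1 + p + 1 = (r + p + 1) + 1 from by omega]
      exact Nat.choose_succ_succ _ _
    rw [h2, show r + 1 + p = r + p + 1 from by omega]
    push_cast; ring

theorem stmt_15 (p r : ℕ) (hr : 1 ≤ r) :
    ∑ t ∈ Finset.range (p + 1), (r : ℤ) ^ t * (stirling (p + 1) (t + 1) : ℤ) =
      (Nat.factorial p : ℤ) * (((r + p + 1).choose (p + 1) : ℤ) - 1) -
        ∑ j ∈ Finset.Icc 1 (r - 1),
          ∑ t ∈ Finset.range (p + 1), (j : ℤ) ^ t * (stirling (p + 1) (t + 1) : ℤ) := by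
  have key : ∑ j ∈ Finset.Icc 1 r,
      ∑ t ∈ Finset.range (p + 1), (j : ℤ) ^ t * (stirling (p + 1) (t + 1) : ℤ) =
      (Nat.factorial p : ℤ) * (((r + p + 1).choose (p + 1) : ℤ) - 1) := by
    rw [← sum_choose_Icc p r]
    exact Finset.sum_congr rfl fun j _ => stirling_sum_choose p j
  have hsplit : Finset.Icc 1 r = insert r (Finset.Icc 1 (r - 1)) := by
    ext x; simp [Finset.mem_Icc, Finset.mem_insert]; omega
  rw [hsplit, Finset.sum_insert (by simp [Finset.mem_Icc]; omega)] at key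
  linarith
end
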